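/- arXiv:2003.06689 — 8 statements merged into one kernel-verified Lean document; each statement's English description precedes it below -/
import Mathlib

section
/- Suppose there exist integers t_1, …, t_n with d_1^{t_1}···d_n^{t_n} ≡ −1 (mod c) (exponents interpreted in the unit group of ℤ/cℤ). Let U = {(t_1, …, t_n) ∈ ℤ^n : d_1^{t_1}···d_n^{t_n} ≡ 1 (mod c)} and let M = {δ ∈ (ℤ/cℤ)^* : δ² = 1 and δ ≡ d_1^{s_1}···d_n^{s_n} (mod c) for some integers s_1, …, s_n}. Then the index p = #(U/(U ∩ 2ℤ^n)) and the cardinality #M satisfy p · #M = 2^n; equivalently, with q = (1/2)·#M, one has p·q = 2^{n−1}. -/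
lemma aux_pq {G : Type*} [CommGroup G] [Finite G] {n : ℕ} (Φ : (Fin n → ℤ) → G)
    (hΦ : ∀ s t, Φ (s + t) = Φ s * Φ t) :
    ((fun t : Fin n → ℤ => fun i => ((t i : ZMod 2))) '' {t | Φ t = 1}).ncard *
      {g : G | g ^ 2 = 1 ∧ ∃ s, Φ s = g}.ncard = 2 ^ n := by
  have hΦ0 : Φ 0 = 1 := by
    have h := hΦ 0 0
    simp only [add_zero] at h
    exact (mul_eq_left.mp h.symm)
  have hΦinv : ∀ t, Φ (-t) = (Φ t)⁻¹ := by
    intro t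
    refine eq_inv_of_mul_eq_one_left ?_
    rw [← hΦ, neg_add_cancel, hΦ0]
  -- the subgroup A = range Φ
  set A : Subgroup G :=
    { carrier := Set.range Φ
      one_mem' := ⟨0, hΦ0⟩
      mul_mem' := by rintro x y ⟨s, rfl⟩ ⟨t, rfl⟩; exact ⟨s + t, hΦ s t⟩
      inv_mem' := by rintro x ⟨s, rfl⟩; exact ⟨-s, hΦinv s⟩ } with hA
  let θ : (Fin n → ℤ) → A := fun t => ⟨Φ t, ⟨t, rfl⟩⟩
  let f : A →* A := powMonoidHom 2
  have hfapply : ∀ a : A, f a = a ^ 2 := fun a => rfl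
  -- key congruence lemma
  have key : ∀ a b : Fin n → ℤ, (∀ i, ((a i : ZMod 2)) = (b i : ZMod 2)) →
      (QuotientGroup.mk (θ a) : A ⧸ f.range) = QuotientGroup.mk (θ b) := by
    intro a b hab
    rw [QuotientGroup.eq]
    have hdvd : ∀ i, 2 ∣ (b i - a i) := by
      intro i
      have : ((b i - a i : ℤ) : ZMod 2) = 0 := by
        push_cast
        rw [hab i]; ring
      exact (ZMod.intCast_zmod_eq_zero_iff_dvd _ 2).mp this
    set s : Fin n → ℤ := fun i => (b i - a i) / 2 with hs
    have hb : b = a + (s + s) := by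
      funext i
      have := (hdvd i).choose_spec
      simp only [hs, Pi.add_apply]
      omega
    have hΦb : Φ b = Φ a * (Φ s) ^ 2 := by
      rw [hb, hΦ, hΦ, sq]
    refine ⟨⟨Φ s, ⟨s, rfl⟩⟩, ?_⟩
    rw [hfapply]
    apply Subtype.ext
    simp [θ, hΦb]
  -- the homomorphism ψ from (ZMod 2)^n to A ⧸ squares
  let ψ0 : (Fin n → ZMod 2) → A ⧸ f.range :=
    fun v => QuotientGroup.mk (θ (fun i => ((v i).val : ℤ)))
  have hψ0cast : ∀ t : Fin n → ℤ, ψ0 (fun i => (t i : ZMod 2)) = QuotientGroup.mk (θ t) := by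
    intro t
    refine key _ _ ?_
    intro i
    push_cast [ZMod.natCast_val]
    simp [ZMod.intCast_cast]
  have hψ0add : ∀ v w, ψ0 (v + w) = ψ0 v * ψ0 w := by
    intro v w
    have h1 : ψ0 (v + w) =
        QuotientGroup.mk (θ ((fun i => ((v i).val : ℤ)) + (fun i => ((w i).val : ℤ)))) := by
      refine key _ _ ?_
      intro i
      push_cast [ZMod.natCast_val]
      simp [ZMod.intCast_cast]
    have hθ : θ ((fun i => ((v i).val : ℤ)) + (fun i => ((w i).val : ℤ)))
        = θ (fun i => ((v i).val : ℤ)) * θ (fun i => ((w i).val : ℤ)) :=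
      Subtype.ext (hΦ _ _)
    rw [h1, hθ, QuotientGroup.mk_mul]
  -- package as a MonoidHom on the Multiplicative type
  let ψ : Multiplicative (Fin n → ZMod 2) →* A ⧸ f.range :=
    MonoidHom.mk' (fun v => ψ0 (Multiplicative.toAdd v)) (by
      intro x y
      exact hψ0add _ _)
  have hψapply : ∀ v : Fin n → ZMod 2, ψ (Multiplicative.ofAdd v) = ψ0 v := fun v => rfl
  -- ψ is surjective
  have hψsurj : Function.Surjective ψ := by
    intro x
    obtain ⟨a, rfl⟩ := QuotientGroup.mk_surjective x
    obtain ⟨t, ht⟩ := a.2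
    refine ⟨Multiplicative.ofAdd (fun i => (t i : ZMod 2)), ?_⟩
    rw [hψapply, hψ0cast]
    congr 1
    exact Subtype.ext ht
  -- Lagrange-type counting
  have hLag1 : Nat.card (Multiplicative (Fin n → ZMod 2)) =
      Nat.card (Multiplicative (Fin n → ZMod 2) ⧸ ψ.ker) * Nat.card ψ.ker :=
    Subgroup.card_eq_card_quotient_mul_card_subgroup ψ.ker
  have hquot : Nat.card (Multiplicative (Fin n → ZMod 2) ⧸ ψ.ker)
      = Nat.card (A ⧸ f.range) :=
    Nat.card_congr (QuotientGroup.quotientKerEquivOfSurjective ψ hψsurj).toEquiv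
  have hLag2 : Nat.card A = Nat.card (A ⧸ f.range) * Nat.card f.range :=
    Subgroup.card_eq_card_quotient_mul_card_subgroup f.range
  have hLag3 : Nat.card A = Nat.card (A ⧸ f.ker) * Nat.card f.ker :=
    Subgroup.card_eq_card_quotient_mul_card_subgroup f.ker
  have hkr : Nat.card (A ⧸ f.ker) = Nat.card f.range :=
    Nat.card_congr (QuotientGroup.quotientKerEquivRange f).toEquiv
  have hrangepos : 0 < Nat.card f.range := Nat.card_pos
  have hcardQ : Nat.card (A ⧸ f.range) = Nat.card f.ker := by
    have h := hLag2.symm.trans hLag3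
    rw [hkr, mul_comm (Nat.card f.range)] at h
    exact Nat.eq_of_mul_eq_mul_right hrangepos h
  -- the image of U mod 2 is the kernel of ψ
  have himg : ((fun t : Fin n → ℤ => fun i => ((t i : ZMod 2))) '' {t | Φ t = 1})
      = {v : Fin n → ZMod 2 | ψ0 v = 1} := by
    ext v
    constructor
    · rintro ⟨t, ht, rfl⟩
      show ψ0 (fun i => (t i : ZMod 2)) = 1
      rw [hψ0cast]
      have hθt : θ t = 1 := Subtype.ext ht
      rw [hθt, QuotientGroup.mk_one]
    · intro hv
      have h1 : (QuotientGroup.mk (θ (fun i => ((v i).val : ℤ))) : A ⧸ f.range) = 1 := hv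
      rw [QuotientGroup.eq_one_iff] at h1
      obtain ⟨a, ha⟩ := h1
      obtain ⟨s, hs⟩ := a.2
      have haval : (Φ s) ^ 2 = Φ (fun i => ((v i).val : ℤ)) := by
        have h2 := congrArg Subtype.val ha
        rw [hfapply] at h2
        simpa [θ, ← hs] using h2
      have hΦv : Φ (fun i => ((v i).val : ℤ)) = Φ (s + s) := by
        rw [hΦ, ← sq, haval]
      refine ⟨(fun i => ((v i).val : ℤ)) - (s + s), ?_, ?_⟩
      · show Φ _ = 1
        rw [sub_eq_add_neg, hΦ, hΦinv, hΦv, mul_inv_cancel]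
      · funext i
        show ((((v i).val : ℤ) - (s i + s i) : ℤ) : ZMod 2) = v i
        push_cast
        have hss : (s i : ZMod 2) + (s i : ZMod 2) = 0 := by
          rw [← two_mul]
          simp [show (2 : ZMod 2) = 0 from rfl]
        rw [hss, sub_zero, ZMod.natCast_val, ZMod.cast_id]
  -- p equals the cardinality of ker ψ
  have hpcard : ((fun t : Fin n → ℤ => fun i => ((t i : ZMod 2))) '' {t | Φ t = 1}).ncard
      = Nat.card ψ.ker := by
    rw [himg, ← Nat.card_coe_set_eq]
    refine Nat.card_congr ?_
    exact
      { toFun := fun x => ⟨Multiplicative.ofAdd x.1, x.2⟩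
        invFun := fun y => ⟨Multiplicative.toAdd y.1, y.2⟩
        left_inv := fun x => rfl
        right_inv := fun y => rfl }
  -- the set M corresponds to ker f (the 2-torsion of A)
  have hMcard : {g : G | g ^ 2 = 1 ∧ ∃ s, Φ s = g}.ncard = Nat.card f.ker := by
    rw [← Nat.card_coe_set_eq]
    refine Nat.card_congr ?_
    refine
      { toFun := fun x => ⟨⟨x.1, x.2.2⟩, ?_⟩
        invFun := fun y => ⟨y.1.1, ?_, y.1.2⟩
        left_inv := fun x => rfl
        right_inv := fun y => rfl }
    · show f ⟨_, _⟩ = 1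
      rw [hfapply]
      exact Subtype.ext (by simpa using x.2.1)
    · have h2 := congrArg Subtype.val (show f y.1 = 1 from y.2)
      rw [hfapply] at h2
      simpa using h2
  have h2n : Nat.card (Multiplicative (Fin n → ZMod 2)) = 2 ^ n := by
    simp [Nat.card_eq_fintype_card]
  rw [hpcard, hMcard, ← hcardQ, mul_comm, ← hquot, ← hLag1, h2n]

/-- **Section 3: `p·q = 2^{n-1}`.**  Let `c > 1` be odd and `d_1, …, d_n > 1` coprime to
`c`, and suppose some product `d_1^{t_1}···d_n^{t_n}` is congruent to `-1 mod c`.  Let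
`U = {t ∈ ℤ^n : d_1^{t_1}···d_n^{t_n} ≡ 1 (mod c)}`, let
`M = {δ ∈ (ℤ/cℤ)^* : δ² = 1 ∧ δ ≡ d_1^{s_1}···d_n^{s_n} (mod c) for some s ∈ ℤ^n}`, and
let `p = #(U/(U ∩ 2ℤ^n))`, computed as the cardinality of the image of `U` under reduction
modulo 2.  Then `p · #M = 2^n`. -/
theorem p_mul_card_M_eq_two_pow (c : ℕ) (hc : 1 < c) (hcodd : Odd c)
    (n : ℕ) (hn : 1 ≤ n) (d : Fin n → ℕ) (hd : ∀ i, 1 < d i)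
    (hdc : ∀ i, Nat.Coprime (d i) c)
    (hneg : ∃ t : Fin n → ℤ,
      ((∏ i, (ZMod.unitOfCoprime (d i) (hdc i)) ^ (t i) : (ZMod c)ˣ) : ZMod c) = -1)
    (U : Set (Fin n → ℤ))
    (hU : U = {t : Fin n → ℤ |
      (∏ i, (ZMod.unitOfCoprime (d i) (hdc i)) ^ (t i) : (ZMod c)ˣ) = 1})
    (M : Set (ZMod c))
    (hM : M = {δ : ZMod c | δ ^ 2 = 1 ∧ ∃ s : Fin n → ℤ,
      ((∏ i, (ZMod.unitOfCoprime (d i) (hdc i)) ^ (s i) : (ZMod c)ˣ) : ZMod c) = δ})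
    (p : ℕ)
    (hp : p = ((fun t : Fin n → ℤ => fun i => ((t i : ZMod 2))) '' U).ncard) :
    p * M.ncard = 2 ^ n := by
  have hc0 : c ≠ 0 := Nat.ne_zero_of_lt hc
  haveI : NeZero c := ⟨hc0⟩
  subst hU hM hp
  set Φ : (Fin n → ℤ) → (ZMod c)ˣ :=
    fun t => ∏ i, (ZMod.unitOfCoprime (d i) (hdc i)) ^ (t i) with hΦdef
  have hΦadd : ∀ s t, Φ (s + t) = Φ s * Φ t := by
    intro s t
    simp only [hΦdef, Pi.add_apply, zpow_add]
    rw [Finset.prod_mul_distrib]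
  have hMT : {δ : ZMod c | δ ^ 2 = 1 ∧ ∃ s : Fin n → ℤ, ((Φ s : (ZMod c)ˣ) : ZMod c) = δ}
      = Units.val '' {g : (ZMod c)ˣ | g ^ 2 = 1 ∧ ∃ s, Φ s = g} := by
    ext δ
    constructor
    · rintro ⟨hδ2, s, hs⟩
      refine ⟨Φ s, ⟨?_, s, rfl⟩, hs⟩
      apply Units.ext
      rw [Units.val_pow_eq_pow_val, hs, hδ2, Units.val_one]
    · rintro ⟨g, ⟨hg2, s, hs⟩, rfl⟩
      refine ⟨?_, s, by rw [hs]⟩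
      rw [← Units.val_pow_eq_pow_val, hg2, Units.val_one]
  show (((fun t : Fin n → ℤ => fun i => ((t i : ZMod 2))) '' {t | Φ t = 1}).ncard) *
      ({δ : ZMod c | δ ^ 2 = 1 ∧ ∃ s : Fin n → ℤ,
        ((Φ s : (ZMod c)ˣ) : ZMod c) = δ}).ncard = 2 ^ n
  rw [hMT, Set.ncard_image_of_injective _ Units.val_injective]
  exact aux_pq Φ hΦadd
end

section
/- Let g ≥ 2 be an integer, c = 2^g + 1, and d = 2^{g−1} + 1. If δ is an integer with δ² ≡ 1 (mod c) and δ ≡ d^{s_1}·2^{s_2} (mod c) for some nonnegative integers s_1, s_2, then δ ≡ 1 (mod c) or δ ≡ −1 (mod c). -/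
/-- Let `g ≥ 2`, `c = 2^g + 1` and `d = 2^{g-1} + 1`.  If `δ² ≡ 1 (mod c)` and
`δ ≡ d^{s₁}·2^{s₂} (mod c)` for some nonnegative integers `s₁, s₂`, then `δ ≡ ±1 (mod c)`. -/
theorem square_roots_of_one_in_d_two_group (g : ℕ) (hg : 2 ≤ g)
    (c d : ℕ) (hc : c = 2 ^ g + 1) (hd : d = 2 ^ (g - 1) + 1)
    (δ : ℤ) (hsq : Int.ModEq (c : ℤ) (δ ^ 2) 1)
    (hrep : ∃ s₁ s₂ : ℕ, Int.ModEq (c : ℤ) δ ((d : ℤ) ^ s₁ * 2 ^ s₂)) :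
    Int.ModEq (c : ℤ) δ 1 ∨ Int.ModEq (c : ℤ) δ (-1) := by
  obtain ⟨s₁, s₂, hrep⟩ := hrep
  have hpow : 2 * 2 ^ (g - 1) = 2 ^ g := by
    rw [← pow_succ']
    congr 1; omega
  have hc5 : 5 ≤ c := by
    have h4 : (4 : ℕ) ≤ 2 ^ g := by
      calc (4:ℕ) = 2 ^ 2 := rfl
        _ ≤ 2 ^ g := Nat.pow_le_pow_right (by norm_num) hg
    omega
  haveI : Fact (1 < c) := ⟨by omega⟩
  haveI : NeZero c := ⟨by omega⟩
  -- 2 * d = 1 in ZMod c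
  have h2d : (2 : ZMod c) * (d : ZMod c) = 1 := by
    have h1 : ((2 * d : ℕ) : ZMod c) = ((c + 1 : ℕ) : ZMod c) := by
      congr 1; rw [hc, hd, ← hpow]; ring
    push_cast at h1
    simpa [ZMod.natCast_self] using h1
  have hd2 : (d : ZMod c) * (2 : ZMod c) = 1 := by rw [mul_comm]; exact h2d
  set u : (ZMod c)ˣ := ⟨2, d, h2d, hd2⟩ with hu
  have huval : (u : ZMod c) = 2 := rfl
  have huinv : ((u⁻¹ : (ZMod c)ˣ) : ZMod c) = d := rfl
  -- 2^g = -1 in ZMod c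
  have h2g : (2 : ZMod c) ^ g = -1 := by
    have h1 : ((2 ^ g + 1 : ℕ) : ZMod c) = 0 := by
      rw [← hc]; exact ZMod.natCast_self c
    push_cast at h1
    linear_combination h1
  have hug : u ^ g = -1 := by
    ext
    rw [Units.val_pow_eq_pow_val, huval, h2g]
    simp
  -- -1 ≠ 1 in the unit group
  have hne : (-1 : (ZMod c)ˣ) ≠ 1 := by
    intro h
    have h' : ((-1 : (ZMod c)ˣ) : ZMod c) = ((1 : (ZMod c)ˣ) : ZMod c) := by rw [h]
    push_cast at h'
    have h2 : ((2 : ℕ) : ZMod c) = 0 := by push_cast; linear_combination -h'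
    rw [ZMod.natCast_eq_zero_iff] at h2
    have := Nat.le_of_dvd (by norm_num) h2
    omega
  -- δ in ZMod c equals u ^ (s₂ - s₁ : ℤ)
  set t : ℤ := (s₂ : ℤ) - (s₁ : ℤ) with ht
  set w : (ZMod c)ˣ := u ^ t with hw
  have hδw : (δ : ZMod c) = (w : ZMod c) := by
    have h1 : (δ : ZMod c) = ((d : ℤ) ^ s₁ * 2 ^ s₂ : ℤ) := by
      exact_mod_cast (ZMod.intCast_eq_intCast_iff _ _ _).mpr hrep
    have h2 : w = u⁻¹ ^ s₁ * u ^ s₂ := by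
      rw [hw, ht, zpow_sub, zpow_natCast, zpow_natCast, mul_comm, inv_pow]
    rw [h2]
    push_cast [huinv, huval]
    rw [h1]
    push_cast
    ring
  -- w ^ 2 = 1
  have hw2 : w ^ 2 = 1 := by
    ext
    push_cast
    rw [← hδw]
    have : ((δ ^ 2 : ℤ) : ZMod c) = ((1 : ℤ) : ZMod c) :=
      (ZMod.intCast_eq_intCast_iff _ _ _).mpr hsq
    push_cast at this
    exact this
  -- order considerations
  set n : ℕ := orderOf u with hn
  have hn2t : (n : ℤ) ∣ 2 * t := by
    rw [hn, orderOf_dvd_iff_zpow_eq_one]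
    rw [mul_comm, zpow_mul, hw.symm]
    exact_mod_cast hw2
  have hn2g : n ∣ 2 * g := by
    apply orderOf_dvd_of_pow_eq_one
    rw [mul_comm, pow_mul, hug]
    simp
  have hng : ¬ n ∣ g := by
    intro h
    exact hne (hug.symm.trans (orderOf_dvd_iff_pow_eq_one.mp h))
  have hnpos : 0 < n := orderOf_pos u
  have hneven : 2 ∣ n := by
    by_contra h
    have hcop : Nat.Coprime n 2 :=
      Nat.coprime_two_right.mpr (Nat.odd_iff.mpr (by omega))
    exact hng (hcop.dvd_of_dvd_mul_left hn2g)
  obtain ⟨m, hm⟩ := hneven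
  have hmg : m ∣ g := by
    have : 2 * m ∣ 2 * g := by rw [← hm]; exact hn2g
    exact (mul_dvd_mul_iff_left (by norm_num : (2:ℕ) ≠ 0)).mp this
  obtain ⟨e, he⟩ := hmg
  have hmpos : 0 < m := by omega
  have heodd : Odd e := by
    rw [Nat.odd_iff]
    rcases Nat.even_or_odd e with h | h
    · obtain ⟨f, hf⟩ := h
      exfalso
      apply hng
      rw [he, hf, hm]
      exact ⟨f, by ring⟩
    · exact Nat.odd_iff.mp h
  have hum2 : (u ^ m) ^ 2 = 1 := by
    rw [← pow_mul, mul_comm, ← hm, hn]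
    exact pow_orderOf_eq_one u
  have hum : u ^ m = -1 := by
    obtain ⟨j, hj⟩ := heodd
    have : u ^ g = (u ^ m) ^ e := by rw [← pow_mul, ← he]
    rw [hug] at this
    rw [hj, pow_add, pow_mul, hum2, one_pow, pow_one, one_mul] at this
    exact this.symm
  -- t = m * q
  obtain ⟨q, hq⟩ := hn2t
  have htmq : t = (m : ℤ) * q := by
    have : (2 : ℤ) * t = 2 * ((m : ℤ) * q) := by
      rw [hq, hm]; push_cast; ring
    linarith
  have hwval : w = ((-1 : (ZMod c)ˣ)) ^ q := by
    rw [hw, htmq, zpow_mul, zpow_natCast, hum]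
  rcases Int.even_or_odd q with ⟨j, hj⟩ | ⟨j, hj⟩
  · left
    have : w = 1 := by
      have h2' : ((-1 : (ZMod c)ˣ)) ^ (2:ℤ) = 1 := by
        rw [zpow_two]; simp
      rw [hwval, hj, ← two_mul, zpow_mul, h2', one_zpow]
    rw [← ZMod.intCast_eq_intCast_iff]
    rw [this] at hδw
    push_cast
    simpa using hδw
  · right
    have : w = -1 := by
      have h2' : ((-1 : (ZMod c)ˣ)) ^ (2:ℤ) = 1 := by
        rw [zpow_two]; simp
      rw [hwval, hj, zpow_add, zpow_mul, h2', one_zpow, zpow_one, one_mul]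
    rw [← ZMod.intCast_eq_intCast_iff]
    rw [this] at hδw
    push_cast
    simpa using hδw
end

section
/- Let g be a positive even integer, c = 2^g + 1, and d = 2^{g−1} + 1. If x and y are nonnegative integers with d^x + 2^y ≡ 0 (mod c), then x ≡ y (mod 2). -/
/-- Let `g` be a positive even integer, `c = 2^g + 1` and `d = 2^{g-1} + 1`.  If `x, y`
are nonnegative integers with `d^x + 2^y ≡ 0 (mod c)`, then `x ≡ y (mod 2)`. -/
theorem parity_match_of_congruence (g : ℕ) (hg : 0 < g) (hgeven : Even g)
    (c d : ℕ) (hc : c = 2 ^ g + 1) (hd : d = 2 ^ (g - 1) + 1)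
    (x y : ℕ) (h : c ∣ d ^ x + 2 ^ y) :
    x % 2 = y % 2 := by
  have hc0 : c ≠ 0 := by rw [hc]; positivity
  have hcN : NeZero c := ⟨hc0⟩
  have h2g : 2 * 2 ^ (g - 1) = 2 ^ g := by
    rw [← pow_succ']
    congr 1
    omega
  -- 2 * d = c + 1
  have h2d : 2 * d = c + 1 := by
    rw [hd, hc]; omega
  have hdu : (d : ZMod c) * 2 = 1 := by
    have : ((2 * d : ℕ) : ZMod c) = ((c + 1 : ℕ) : ZMod c) := by rw [h2d]
    push_cast at this
    rw [ZMod.natCast_self] at this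
    linear_combination this
  -- 2^g = -1 in ZMod c
  have hneg : (2 : ZMod c) ^ g = -1 := by
    have : ((2 ^ g + 1 : ℕ) : ZMod c) = 0 := by rw [← hc, ZMod.natCast_self]
    push_cast at this
    linear_combination this
  -- from h : 2^(x+y) = -1
  have h0 : ((d ^ x + 2 ^ y : ℕ) : ZMod c) = 0 := (ZMod.natCast_eq_zero_iff _ _).mpr h
  push_cast at h0
  have hkey : (2 : ZMod c) ^ (x + y) = -1 := by
    have hx : (d : ZMod c) ^ x * 2 ^ x = 1 := by
      rw [← mul_pow, hdu, one_pow]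
    have := congrArg (· * (2 : ZMod c) ^ x) h0
    simp only [add_mul, zero_mul] at this
    rw [hx] at this
    calc (2 : ZMod c) ^ (x + y) = 2 ^ y * 2 ^ x := by rw [pow_add]; ring
    _ = -1 := by linear_combination this
  -- 2^(x+y+g) = 1
  have hone : (2 : ZMod c) ^ (x + y + g) = 1 := by
    rw [pow_add, hkey, hneg]; ring
  have h2g1 : (2 : ZMod c) ^ (2 * g) = 1 := by
    rw [pow_mul']; rw [hneg]; ring
  have hfin : IsOfFinOrder (2 : ZMod c) := by
    exact isOfFinOrder_iff_pow_eq_one.mpr ⟨2 * g, by omega, h2g1⟩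
  set t := orderOf (2 : ZMod c) with ht
  have htpos : 0 < t := hfin.orderOf_pos
  have ht2g : t ∣ 2 * g := orderOf_dvd_of_pow_eq_one h2g1
  have htxy : t ∣ x + y + g := orderOf_dvd_of_pow_eq_one hone
  -- t is even
  have hteven : 2 ∣ t := by
    by_contra hodd
    have hcop : Nat.Coprime t 2 :=
      Nat.coprime_comm.mp ((Nat.Prime.coprime_iff_not_dvd Nat.prime_two).mpr hodd)
    have htg : t ∣ g := hcop.dvd_of_dvd_mul_left ht2g
    have h1 : (2 : ZMod c) ^ t = 1 := pow_orderOf_eq_one _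
    have h1' : ((2 ^ t : ℕ) : ZMod c) = ((1 : ℕ) : ZMod c) := by push_cast; simpa using h1
    have hmod : c ∣ 2 ^ t - 1 := by
      have := (ZMod.natCast_eq_natCast_iff _ _ _).mp h1'
      exact (Nat.modEq_iff_dvd' (Nat.one_le_two_pow)).mp this.symm
    have hle : 2 ^ t ≤ 2 ^ g := Nat.pow_le_pow_right (by norm_num) (Nat.le_of_dvd hg htg)
    have h2t : 2 ≤ 2 ^ t := by
      calc 2 = 2 ^ 1 := rfl
      _ ≤ 2 ^ t := Nat.pow_le_pow_right (by norm_num) htpos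
    have := Nat.le_of_dvd (by omega) hmod
    omega
  obtain ⟨k, hk⟩ := hgeven
  have h2xy : 2 ∣ x + y + g := hteven.trans htxy
  omega
end

section
/- Let p be an odd prime, let g be a positive even integer with 2^g ≡ −1 (mod p), and let d be an integer with 2d ≡ 1 (mod p). Let r be a primitive root modulo p, and let w_2 and w_d be positive integers with r^{w_2} ≡ 2 (mod p) and r^{w_d} ≡ d (mod p). Then v_2(w_d) = v_2(w_2) = v_2(p − 1) − v_2(g) − 1, where v_2 denotes the 2-adic valuation. -/
/-- Let `p` be an odd prime, `g` a positive even integer with `2^g ≡ -1 (mod p)`, and `d`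
an integer with `2d ≡ 1 (mod p)`.  Let `r` be a primitive root modulo `p` and `w₂, w_d`
positive integers with `r^{w₂} ≡ 2 (mod p)` and `r^{w_d} ≡ d (mod p)`.  Then
`v₂(w_d) = v₂(w₂) = v₂(p - 1) - v₂(g) - 1`. -/
theorem two_adic_valuation_of_indices (p : ℕ) (hp : p.Prime) (hodd : Odd p)
    (g : ℕ) (hg : 0 < g) (hgeven : Even g)
    (h2g : Int.ModEq (p : ℤ) (2 ^ g) (-1))
    (d : ℤ) (hd : Int.ModEq (p : ℤ) (2 * d) 1)
    (r : ℤ) (hr : IsPrimitiveRoot ((r : ℤ) : ZMod p) (p - 1))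
    (w₂ wd : ℕ) (hw₂pos : 0 < w₂) (hwdpos : 0 < wd)
    (hw₂ : Int.ModEq (p : ℤ) (r ^ w₂) 2) (hwd : Int.ModEq (p : ℤ) (r ^ wd) d) :
    (padicValNat 2 wd : ℤ) =
        (padicValNat 2 (p - 1) : ℤ) - (padicValNat 2 g : ℤ) - 1 ∧
      (padicValNat 2 w₂ : ℤ) =
        (padicValNat 2 (p - 1) : ℤ) - (padicValNat 2 g : ℤ) - 1 := by
  haveI : Fact p.Prime := ⟨hp⟩
  have hp2 : p ≠ 2 := by rintro rfl; exact (Nat.not_odd_iff_even.mpr (by decide)) hodd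
  have hp3 : 2 < p := lt_of_le_of_ne hp.two_le (Ne.symm hp2)
  haveI : Fact (2 < p) := ⟨hp3⟩
  set n : ℕ := p - 1 with hn
  have hn0 : n ≠ 0 := by omega
  -- cast hypotheses to ZMod p
  have e2 : ((r : ZMod p)) ^ w₂ = 2 := by
    have := (ZMod.intCast_eq_intCast_iff _ _ _).mpr hw₂
    push_cast at this; exact this
  have eg : ((2 : ZMod p)) ^ g = -1 := by
    have := (ZMod.intCast_eq_intCast_iff _ _ _).mpr h2g
    push_cast at this; exact this
  have ed : (2 : ZMod p) * (d : ZMod p) = 1 := by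
    have := (ZMod.intCast_eq_intCast_iff _ _ _).mpr hd
    push_cast at this; exact this
  have ewd : ((r : ZMod p)) ^ wd = (d : ZMod p) := by
    have := (ZMod.intCast_eq_intCast_iff _ _ _).mpr hwd
    push_cast at this; exact this
  -- a = g * w₂ : r ^ a = -1
  set a : ℕ := g * w₂ with ha
  have ha0 : a ≠ 0 := Nat.mul_ne_zero hg.ne' hw₂pos.ne'
  have era : ((r : ZMod p)) ^ a = -1 := by
    rw [ha, pow_mul', e2, eg]
  have hndvd2a : n ∣ 2 * a := by
    have : ((r : ZMod p)) ^ (2 * a) = 1 := by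
      rw [mul_comm, pow_mul, era]; ring
    exact (hr.pow_eq_one_iff_dvd _).mp this
  have hnndvda : ¬ n ∣ a := by
    intro hdvd
    have : ((r : ZMod p)) ^ a = 1 := (hr.pow_eq_one_iff_dvd _).mpr hdvd
    rw [era] at this
    exact ZMod.neg_one_ne_one this
  -- key valuation computation
  set k : ℕ := padicValNat 2 n with hk
  set m : ℕ := padicValNat 2 a with hm
  have h2a0 : 2 * a ≠ 0 := by positivity
  have hv2a : padicValNat 2 (2 * a) = 1 + m := by
    rw [padicValNat.mul two_ne_zero ha0, padicValNat.self one_lt_two]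
  have hkle : k ≤ 1 + m := by
    rw [← hv2a]
    exact (padicValNat_dvd_iff_le h2a0).mp (dvd_trans pow_padicValNat_dvd hndvd2a)
  have hmk : m < k := by
    by_contra hle
    push_neg at hle
    apply hnndvda
    -- n = 2^k * ordCompl, both divide a
    have h2k : (2 : ℕ) ^ k ∣ a := (padicValNat_dvd_iff_le ha0).mpr hle
    have hoc : ordCompl[2] n ∣ a := by
      have h1 : ordCompl[2] n ∣ 2 * a := dvd_trans (Nat.ordCompl_dvd n 2) hndvd2a
      have h2 : Nat.Coprime (ordCompl[2] n) 2 :=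
        (Nat.coprime_ordCompl Nat.prime_two hn0).symm
      exact (Nat.Coprime.dvd_of_dvd_mul_left h2 h1)
    have hcop : Nat.Coprime ((2 : ℕ) ^ k) (ordCompl[2] n) :=
      Nat.Coprime.pow_left _ ((Nat.Prime.coprime_iff_not_dvd Nat.prime_two).mpr
        (Nat.not_dvd_ordCompl Nat.prime_two hn0))
    have := Nat.Coprime.mul_dvd_of_dvd_of_dvd hcop h2k hoc
    rw [hk, ← Nat.factorization_def n Nat.prime_two] at this
    rwa [Nat.ordProj_mul_ordCompl_eq_self] at this
  have hkey : k = m + 1 := by omega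
  have hma : m = padicValNat 2 g + padicValNat 2 w₂ := by
    rw [hm, ha, padicValNat.mul hg.ne' hw₂pos.ne']
  -- second conjunct
  have hc2 : (padicValNat 2 w₂ : ℤ) =
      (padicValNat 2 n : ℤ) - (padicValNat 2 g : ℤ) - 1 := by
    rw [← hk, hkey, hma]; push_cast; ring
  refine ⟨?_, hc2⟩
  -- n ∣ wd + w₂
  have hsum : n ∣ wd + w₂ := by
    have : ((r : ZMod p)) ^ (wd + w₂) = 1 := by
      rw [pow_add, ewd, e2, mul_comm, ed]
    exact (hr.pow_eq_one_iff_dvd _).mp this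
  set v : ℕ := padicValNat 2 w₂ with hv
  have hvk : v + 1 ≤ k := by
    have : v ≤ m := by omega
    omega
  have hs0 : wd + w₂ ≠ 0 := by omega
  have h2vs : (2 : ℕ) ^ (v + 1) ∣ wd + w₂ := by
    refine dvd_trans (pow_dvd_pow 2 hvk) ?_
    exact dvd_trans pow_padicValNat_dvd hsum
  have h2vw₂ : (2 : ℕ) ^ v ∣ w₂ := pow_padicValNat_dvd
  have h2vwd : (2 : ℕ) ^ v ∣ wd := by
    have := Nat.dvd_sub (dvd_trans (pow_dvd_pow 2 (Nat.le_succ v)) h2vs) h2vw₂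
    simpa using this
  have h2v1wd : ¬ (2 : ℕ) ^ (v + 1) ∣ wd := by
    intro hdvd
    have := Nat.dvd_sub h2vs hdvd
    simp only [Nat.add_sub_cancel_left] at this
    exact pow_succ_padicValNat_not_dvd hw₂pos.ne' this
  have hle1 : v ≤ padicValNat 2 wd := (padicValNat_dvd_iff_le hwdpos.ne').mp h2vwd
  have hle2 : ¬ (v + 1 ≤ padicValNat 2 wd) := fun h =>
    h2v1wd ((padicValNat_dvd_iff_le hwdpos.ne').mpr h)
  have : padicValNat 2 wd = v := by omega
  rw [this]
  exact hc2
end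

section
/- Let u, C, ν be positive integers with u and C odd and gcd(u, C) = 1, and suppose 4u² − C² = ε·3^ν with ε ∈ {1, −1}. Then ε = 1, ν is odd, C = (3^ν − 1)/2, and u = (3^ν + 1)/4. -/
lemma pow3mod8 (n : ℕ) : (3:ℤ)^n % 8 = 1 ∨ (3:ℤ)^n % 8 = 3 := by
  induction n with
  | zero => left; rfl
  | succ n ih => rw [pow_succ]; rcases ih with h | h <;> omega

lemma pow9mod8 (n : ℕ) : (9:ℤ)^n % 8 = 1 := by
  induction n with
  | zero => rfl
  | succ n ih => rw [pow_succ]; omega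

/-- Let `u, C, ν` be positive integers with `u, C` odd and `gcd(u, C) = 1`, and suppose
`4u² - C² = ε·3^ν` with `ε = ±1`.  Then `ε = 1`, `ν` is odd, `C = (3^ν - 1)/2` and
`u = (3^ν + 1)/4`. -/
theorem case_one_shape (u C : ℤ) (ν : ℕ) (hu : 0 < u) (hC : 0 < C) (hν : 0 < ν)
    (huodd : Odd u) (hCodd : Odd C) (hcop : IsCoprime u C)
    (ε : ℤ) (hε : ε = 1 ∨ ε = -1)
    (heq : 4 * u ^ 2 - C ^ 2 = ε * 3 ^ ν) :
    ε = 1 ∧ Odd ν ∧ 2 * C = 3 ^ ν - 1 ∧ 4 * u = 3 ^ ν + 1 := by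
  have hu2 : u % 2 = 1 := Int.odd_iff.mp huodd
  have hC2 : C % 2 = 1 := Int.odd_iff.mp hCodd
  set a := 2*u - C with ha
  set b := 2*u + C with hb
  have hab : a * b = ε * 3 ^ ν := by rw [← heq]; ring
  have hb3 : 3 ≤ b := by omega
  -- gcd a b = 1
  have hd1 : (Int.gcd a b : ℤ) ∣ a := Int.gcd_dvd_left a b
  have hd2 : (Int.gcd a b : ℤ) ∣ b := Int.gcd_dvd_right a b
  have hdC : (Int.gcd a b : ℤ) ∣ C * 2 := by
    have := dvd_sub hd2 hd1; rwa [show b - a = C * 2 by omega] at this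
  have hdu : (Int.gcd a b : ℤ) ∣ (2 * u) * 2 := by
    have := dvd_add hd2 hd1; rwa [show b + a = (2 * u) * 2 by omega] at this
  have hdodd : ¬ (2:ℤ) ∣ (Int.gcd a b : ℤ) := by
    intro h
    have h2a : (2:ℤ) ∣ a := h.trans hd1
    omega
  have hcop2 : IsCoprime ((Int.gcd a b : ℤ)) 2 :=
    ((Int.prime_two.coprime_iff_not_dvd).mpr hdodd).symm
  have hdu' : (Int.gcd a b : ℤ) ∣ u := by
    have h1 : (Int.gcd a b : ℤ) ∣ 2 * u := hcop2.dvd_of_dvd_mul_right hdu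
    rw [mul_comm] at h1
    exact hcop2.dvd_of_dvd_mul_right h1
  have hdC' : (Int.gcd a b : ℤ) ∣ C := hcop2.dvd_of_dvd_mul_right hdC
  have hgcd1 : Int.gcd a b = 1 := by
    obtain ⟨x, y, hxy⟩ := hcop
    have hdvd1 : (Int.gcd a b : ℤ) ∣ 1 := by
      rw [← hxy]; exact dvd_add (Dvd.dvd.mul_left hdu' x) (Dvd.dvd.mul_left hdC' y)
    have hle := Int.le_of_dvd one_pos hdvd1
    have h0 : Int.gcd a b ≠ 0 := by
      intro h
      obtain ⟨h1', h2'⟩ := Int.gcd_eq_zero_iff.mp h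
      omega
    omega
  -- natAbs product
  have hεabs : ε.natAbs = 1 := by rcases hε with rfl | rfl <;> rfl
  have hABν : a.natAbs * b.natAbs = 3 ^ ν := by
    have h := congrArg Int.natAbs hab
    simpa [Int.natAbs_mul, Int.natAbs_pow, hεabs] using h
  have hA3 : a.natAbs ∣ 3 ^ ν := ⟨b.natAbs, hABν.symm⟩
  have hB3 : b.natAbs ∣ 3 ^ ν := ⟨a.natAbs, by rw [mul_comm]; exact hABν.symm⟩
  obtain ⟨i, hi, hA⟩ := (Nat.dvd_prime_pow Nat.prime_three).mp hA3
  obtain ⟨j, hj, hB⟩ := (Nat.dvd_prime_pow Nat.prime_three).mp hB3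
  have hij : i + j = ν := by
    have : (3:ℕ) ^ (i + j) = 3 ^ ν := by rw [pow_add, ← hA, ← hB]; exact hABν
    exact Nat.pow_right_injective (by norm_num) this
  have hi0 : i = 0 := by
    by_contra hi0
    have hj0 : j = 0 := by
      by_contra hj0
      have h3A : 3 ∣ a.natAbs := hA ▸ dvd_pow_self 3 hi0
      have h3B : 3 ∣ b.natAbs := hB ▸ dvd_pow_self 3 hj0
      have : (3:ℕ) ∣ Nat.gcd a.natAbs b.natAbs := Nat.dvd_gcd h3A h3B
      rw [Int.gcd] at hgcd1
      omega
    -- j = 0 means b.natAbs = 1, contradicting 3 ≤ b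
    rw [hj0, pow_zero] at hB
    have := Int.natAbs_eq b
    omega
  rw [hi0, pow_zero] at hA
  have hjν : j = ν := by omega
  rw [hjν] at hB
  have hbval : b = 3 ^ ν := by
    have h1 : (b.natAbs : ℤ) = b := Int.natAbs_of_nonneg (by omega)
    rw [← h1, hB]; push_cast; ring
  have haval : a = ε := by
    have h3 : (3:ℤ) ^ ν ≠ 0 := pow_ne_zero _ (by norm_num)
    rw [hbval] at hab
    exact mul_right_cancel₀ h3 hab
  rcases hε with rfl | rfl
  · refine ⟨rfl, ?_, by omega, by omega⟩
    by_contra h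
    obtain ⟨m, hm⟩ := Nat.not_odd_iff_even.mp h
    have h9 : (3:ℤ) ^ ν = 9 ^ m := by
      rw [hm, ← two_mul, pow_mul]; norm_num
    have h8 := pow9mod8 m
    rw [h9] at hbval
    omega
  · exfalso
    have h8 := pow3mod8 ν
    rcases h8 with h8 | h8 <;> omega
end

section
/- Let ν > 1 be an odd integer, let c > 1 be an odd integer, and let z_1 be a positive integer with c^{z_1} = (3^ν − 1)/2. Put A_1 = 3·(3^{ν−1} − 1)/8 and B_1 = (3^{ν+1} − 1)/8. Then there do not exist a positive integer z_2 and positive integers A_2, B_2 with B_2 − A_2 = 1, A_2 + B_2 = c^{z_2}, and the set of primes dividing A_2·B_2 equal to the set of primes dividing A_1·B_1. -/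
private def pellStep (p : ℕ × ℕ) : ℕ × ℕ := (5 * p.1 + 4 * p.2, 6 * p.1 + 5 * p.2)

private def pellL : List (ℕ × ℕ) :=
  [(1, 1), (9, 11), (89, 109), (422, 161), (0, 124), (37, 161), (370, 109), (450, 11),
   (458, 1), (458, 458), (450, 448), (370, 350), (37, 298), (0, 335), (422, 298),
   (89, 350), (9, 448), (1, 458)]

private def pow3L : List ℕ :=
  [27, 54, 81, 108, 135, 162, 189, 216, 243, 270, 297, 324, 351, 378, 405, 432]

private lemma pell_classify : ∀ x : ℕ, ∀ y : ℕ, 3 * x ^ 2 = 2 * y ^ 2 + 1 →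
    ∃ n, pellStep^[n] (1, 1) = (x, y) := by
  intro x
  induction x using Nat.strong_induction_on with
  | _ x ih =>
    intro y hxy
    rcases Nat.lt_or_ge x 3 with h3 | h3
    · interval_cases x
      · exfalso
        obtain ⟨t, ht⟩ : ∃ t, y ^ 2 = t := ⟨_, rfl⟩
        rw [ht] at hxy; omega
      · have h1 : y ^ 2 = 1 := by
          obtain ⟨t, ht⟩ : ∃ t, y ^ 2 = t := ⟨_, rfl⟩
          rw [ht] at hxy ⊢; omega
        have hy1 : y = 1 := by nlinarith
        exact ⟨0, by simp [hy1]⟩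
      · exfalso
        obtain ⟨t, ht⟩ : ∃ t, y ^ 2 = t := ⟨_, rfl⟩
        rw [ht] at hxy; omega
    · have h9 : 9 ≤ x ^ 2 := by nlinarith
      have h1 : x ^ 2 < y ^ 2 := by nlinarith
      have hyx : x < y := by
        by_contra hcon
        push_neg at hcon
        exact absurd (Nat.pow_le_pow_left hcon 2) (by omega)
      have hy4 : 4 ≤ y := by omega
      have h45 : 4 * y < 5 * x := by nlinarith
      have h65 : 6 * x < 5 * y := by nlinarith
      set a := 5 * x - 4 * y with hadef
      set b := 5 * y - 6 * x with hbdef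
      have ha : a + 4 * y = 5 * x := by omega
      have hb : b + 6 * x = 5 * y := by omega
      have hsol : 3 * a ^ 2 = 2 * b ^ 2 + 1 := by
        zify at ha hb hxy ⊢
        have hA : (a : ℤ) = 5 * x - 4 * y := by linarith
        have hB : (b : ℤ) = 5 * y - 6 * x := by linarith
        rw [hA, hB]; linear_combination hxy
      have hax : a < x := by omega
      obtain ⟨n, hn⟩ := ih a hax b hsol
      refine ⟨n + 1, ?_⟩
      rw [Function.iterate_succ_apply', hn]
      have hstep : pellStep (a, b) = (5 * a + 4 * b, 6 * a + 5 * b) := rfl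
      rw [hstep]
      have e1 : 5 * a + 4 * b = x := by omega
      have e2 : 6 * a + 5 * b = y := by omega
      rw [e1, e2]

private lemma pell_orbit (n : ℕ) :
    ((pellStep^[n] (1, 1)).1 % 459, (pellStep^[n] (1, 1)).2 % 459) ∈ pellL := by
  induction n with
  | zero => simp only [Function.iterate_zero, id]; decide
  | succ n ih =>
    rw [Function.iterate_succ_apply']
    have key : ∀ q ∈ pellL, ((5 * q.1 + 4 * q.2) % 459, (6 * q.1 + 5 * q.2) % 459) ∈ pellL := by
      decide
    set p := pellStep^[n] (1, 1) with hp
    have e1 : (pellStep p).1 % 459 = (5 * (p.1 % 459) + 4 * (p.2 % 459)) % 459 := by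
      show (5 * p.1 + 4 * p.2) % 459 = _
      omega
    have e2 : (pellStep p).2 % 459 = (6 * (p.1 % 459) + 5 * (p.2 % 459)) % 459 := by
      show (6 * p.1 + 5 * p.2) % 459 = _
      omega
    rw [e1, e2]
    exact key (p.1 % 459, p.2 % 459) ih

private lemma pow3_orbit (k : ℕ) : 3 ^ (k + 3) % 459 ∈ pow3L := by
  induction k with
  | zero => decide
  | succ k ih =>
    have key : ∀ t ∈ pow3L, 3 * t % 459 ∈ pow3L := by decide
    have e : (3:ℕ) ^ (k + 1 + 3) % 459 = 3 * (3 ^ (k + 3) % 459) % 459 := by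
      have e0 : k + 1 + 3 = (k + 3) + 1 := by omega
      rw [e0, pow_succ', Nat.mul_mod]
    rw [e]
    exact key _ ih

private lemma pell_pow3_disjoint : ∀ q ∈ pellL, ∀ t ∈ pow3L, q.1 ≠ t := by decide

private lemma nagell (k y : ℕ) (h : 3 * (3 ^ k) ^ 2 = 2 * y ^ 2 + 1) : k = 0 ∨ k = 2 := by
  by_contra hcon
  push_neg at hcon
  obtain ⟨hk0, hk2⟩ := hcon
  rcases Nat.lt_or_ge k 3 with hk | hk
  · interval_cases k
    · exact hk0 rfl
    · norm_num at h
      rcases Nat.lt_or_ge y 4 with hy | hy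
      · interval_cases y <;> omega
      · nlinarith
    · exact hk2 rfl
  · obtain ⟨n, hn⟩ := pell_classify (3 ^ k) y h
    have hmem := pell_orbit n
    rw [hn] at hmem
    have hpow := pow3_orbit (k - 3)
    have e : k - 3 + 3 = k := by omega
    rw [e] at hpow
    exact pell_pow3_disjoint _ hmem _ hpow rfl

/-- **Mutual exclusivity of Cases 1 and 2.**  Let `ν > 1` be odd, `c > 1` odd and `z₁ > 0`
with `c^{z₁} = (3^ν - 1)/2`, and put `A₁ = 3·(3^{ν-1} - 1)/8`, `B₁ = (3^{ν+1} - 1)/8`.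
Then there are no positive integers `z₂, A₂, B₂` with `B₂ = A₂ + 1`, `A₂ + B₂ = c^{z₂}`
and the set of primes dividing `A₂·B₂` equal to the set of primes dividing `A₁·B₁`. -/
theorem case_one_and_case_two_mutually_exclusive
    (ν : ℕ) (hν : Odd ν) (hν1 : 1 < ν) (c : ℕ) (hc : 1 < c) (hcodd : Odd c)
    (z₁ : ℕ) (hz₁ : 0 < z₁) (hcz : 2 * c ^ z₁ = 3 ^ ν - 1)
    (A₁ B₁ : ℕ) (hA₁ : 8 * A₁ = 3 * (3 ^ (ν - 1) - 1)) (hB₁ : 8 * B₁ = 3 ^ (ν + 1) - 1) :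
    ¬ ∃ z₂ A₂ B₂ : ℕ, 0 < z₂ ∧ 0 < A₂ ∧ 0 < B₂ ∧ B₂ = A₂ + 1 ∧
      A₂ + B₂ = c ^ z₂ ∧
      (∀ p : ℕ, p.Prime → (p ∣ A₂ * B₂ ↔ p ∣ A₁ * B₁)) := by
  rintro ⟨z₂, A₂, B₂, hz₂, hA₂, hB₂, rfl, hsum, hiff⟩
  have hc3 : 3 ≤ c := by obtain ⟨m, hm⟩ := hcodd; omega
  have hν3 : 3 ≤ ν := by obtain ⟨m, hm⟩ := hν; omega
  have hNge : 3 ≤ c ^ z₁ := le_trans hc3 (Nat.le_self_pow (by omega) c)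
  have h3ν : 3 ^ ν = 2 * c ^ z₁ + 1 := by
    have h1 : 1 ≤ 3 ^ ν := Nat.one_le_pow _ _ (by norm_num)
    omega
  have hpow1 : 3 * 3 ^ (ν - 1) = 3 ^ ν := by
    rw [← pow_succ']; congr 1; omega
  have hpow2 : (3:ℕ) ^ (ν + 1) = 3 ^ ν * 3 := by rw [pow_succ]
  have h1le : 1 ≤ (3:ℕ) ^ (ν - 1) := Nat.one_le_pow _ _ (by norm_num)
  have hA₁' : 8 * A₁ = 3 * 3 ^ (ν - 1) - 3 := by
    rw [hA₁, Nat.mul_sub]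
  have h4A₁ : 4 * A₁ + 1 = c ^ z₁ := by omega
  have h4B₁ : 4 * B₁ = 3 * c ^ z₁ + 1 := by omega
  have hz2eq : 2 * A₂ + 1 = c ^ z₂ := by omega
  rcases Nat.even_or_odd z₁ with hz₁e | hz₁o
  · -- z₁ even : Nagell case
    obtain ⟨t, ht⟩ := hz₁e
    obtain ⟨k, hk⟩ := hν
    have hM : (c ^ t) ^ 2 = c ^ z₁ := by rw [← pow_mul]; congr 1; omega
    have hNag : 3 * (3 ^ k) ^ 2 = 2 * (c ^ t) ^ 2 + 1 := by
      have e1 : 3 * (3 ^ k) ^ 2 = 3 ^ ν := by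
        rw [← pow_mul, ← pow_succ']; congr 1; omega
      rw [e1, hM]; exact h3ν
    rcases nagell k (c ^ t) hNag with hk0 | hk2
    · omega
    · have hν5 : ν = 5 := by omega
      have hN121 : c ^ z₁ = 121 := by
        rw [hν5] at h3ν; norm_num at h3ν; omega
      have hch : c ^ t = 11 := by
        have h2 : (c ^ t) ^ 2 = 121 := by rw [hM, hN121]
        have hle : c ^ t ≤ 11 := by
          by_contra hgt
          push_neg at hgt
          have h144 : 12 ^ 2 ≤ (c ^ t) ^ 2 := Nat.pow_le_pow_left hgt 2
          norm_num at h144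
          omega
        have hge : 11 ≤ c ^ t := by
          by_contra hlt
          push_neg at hlt
          have h100 : (c ^ t) ^ 2 ≤ 10 ^ 2 := Nat.pow_le_pow_left (by omega) 2
          norm_num at h100
          omega
        omega
      have ht0 : t ≠ 0 := by rintro rfl; simp at hch
      have hcdvd : c ∣ 11 := hch ▸ dvd_pow_self c ht0
      have hc11 : c = 11 := by
        rcases (Nat.Prime.eq_one_or_self_of_dvd (by norm_num : Nat.Prime 11) c hcdvd) with h1 | h1 <;>
          omega
      subst hc11
      have hA₁30 : A₁ = 30 := by rw [hν5] at hA₁; norm_num at hA₁; omega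
      have hB₁91 : B₁ = 91 := by rw [hν5] at hB₁; norm_num at hB₁; omega
      have h7 : (7:ℕ) ∣ A₂ * (A₂ + 1) :=
        (hiff 7 (by norm_num)).mpr (by rw [hA₁30, hB₁91]; norm_num)
      have hmod : ∀ z : ℕ, 11 ^ z % 7 = 4 ^ (z % 3) % 7 := by
        intro z
        conv_lhs => rw [← Nat.div_add_mod z 3, pow_add, pow_mul]
        rw [Nat.mul_mod, Nat.pow_mod]
        norm_num [Nat.pow_mod]
      have h3z : z₂ % 3 = 0 := by
        have hmz := hmod z₂
        rcases (Nat.Prime.dvd_mul (by norm_num : Nat.Prime 7)).mp h7 with h | h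
        · obtain ⟨s, hs⟩ := h
          have h1 : 11 ^ z₂ % 7 = 1 := by omega
          have hr : z₂ % 3 = 0 ∨ z₂ % 3 = 1 ∨ z₂ % 3 = 2 := by omega
          rcases hr with h | h | h <;> rw [h] at hmz <;> norm_num at hmz <;> omega
        · obtain ⟨s, hs⟩ := h
          have h1 : 11 ^ z₂ % 7 = 6 := by omega
          have hr : z₂ % 3 = 0 ∨ z₂ % 3 = 1 ∨ z₂ % 3 = 2 := by omega
          rcases hr with h | h | h <;> rw [h] at hmz <;> norm_num at hmz <;> omega
      obtain ⟨m, hm⟩ : 3 ∣ z₂ := ⟨z₂ / 3, by omega⟩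
      have h1330 : (1330:ℕ) ∣ 11 ^ z₂ - 1 := by
        have h1 : (1331:ℕ) ^ m - 1 ^ m = 11 ^ z₂ - 1 := by
          rw [one_pow]; congr 1
          rw [show (1331:ℕ) = 11 ^ 3 by norm_num, ← pow_mul]; congr 1; omega
        have h2 := Nat.sub_dvd_pow_sub_pow 1331 1 m
        rw [h1] at h2
        simpa using h2
      have h19 : (19:ℕ) ∣ A₂ := by
        have h2 : (19:ℕ) ∣ 11 ^ z₂ - 1 := dvd_trans (by norm_num) h1330
        have h3 : 11 ^ z₂ - 1 = 2 * A₂ := by omega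
        rw [h3] at h2
        rcases (Nat.Prime.dvd_mul (by norm_num : Nat.Prime 19)).mp h2 with h | h
        · norm_num at h
        · exact h
      have h19' : (19:ℕ) ∣ A₁ * B₁ :=
        (hiff 19 (by norm_num)).mp (Dvd.dvd.mul_right h19 _)
      rw [hA₁30, hB₁91] at h19'
      norm_num at h19'
  · -- z₁ odd
    have h8 : 3 ^ ν % 8 = 3 := by
      obtain ⟨m, hm⟩ := hν
      subst hm
      rw [pow_succ, pow_mul, Nat.mul_mod, Nat.pow_mod]
      norm_num
    have hN4 : c ^ z₁ % 4 = 1 := by omega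
    have hdvd1 : (c + 1) ∣ c ^ z₁ + 1 := by
      have h := Odd.nat_add_dvd_pow_add_pow c 1 hz₁o
      simpa using h
    have hKpos : 0 < ordCompl[2] (c + 1) := Nat.ordCompl_pos 2 (by omega)
    rcases Nat.eq_or_lt_of_le hKpos with hK1 | hK2
    · -- c+1 = 2^t
      have hself := Nat.ordProj_mul_ordCompl_eq_self (c + 1) 2
      have hK1' : ordCompl[2] (c + 1) = 1 := by omega
      rw [hK1', mul_one] at hself
      set s := (c + 1).factorization 2 with hs
      have hs2 : 2 ≤ s := by
        by_contra hcon
        push_neg at hcon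
        interval_cases s <;> norm_num at hself <;> omega
      have h4dvd : (4:ℕ) ∣ c + 1 := by
        have h1 : (2:ℕ) ^ 2 ∣ 2 ^ s := pow_dvd_pow 2 hs2
        rw [hself] at h1
        simpa using h1
      have h4N : (4:ℕ) ∣ c ^ z₁ + 1 := h4dvd.trans hdvd1
      omega
    · -- odd prime divisor p of c+1
      set p := (ordCompl[2] (c + 1)).minFac with hpdef
      have hKne1 : ordCompl[2] (c + 1) ≠ 1 := by omega
      have hpprime : p.Prime := Nat.minFac_prime hKne1
      have hpdvdK : p ∣ ordCompl[2] (c + 1) := by rw [hpdef]; exact Nat.minFac_dvd _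
      have hpdvdc1 : p ∣ c + 1 := hpdvdK.trans (Nat.ordCompl_dvd (c + 1) 2)
      have hpne2 : p ≠ 2 := by
        intro h
        exact Nat.not_dvd_ordCompl Nat.prime_two (show c + 1 ≠ 0 by omega) (h ▸ hpdvdK)
      have hp2 : 2 ≤ p := hpprime.two_le
      have hpA2B2 : p ∣ A₂ * (A₂ + 1) := by
        rcases Nat.even_or_odd z₂ with hz2e | hz2o
        · obtain ⟨w, hw⟩ := hz2e
          have hc1dvd : (c + 1) ∣ c ^ z₂ - 1 := by
            have h2 : (c + 1) ∣ c ^ 2 - 1 := by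
              obtain ⟨d, rfl⟩ : ∃ d, c = d + 1 := ⟨c - 1, by omega⟩
              have he : (d + 1) ^ 2 - 1 = (d + 1 + 1) * d := by
                have h1 : (d + 1) ^ 2 = (d + 1 + 1) * d + 1 := by ring
                rw [h1]
                omega
              rw [he]
              exact dvd_mul_right _ _
            have h1 : ((c ^ 2) - 1) ∣ (c ^ 2) ^ w - 1 := by
              simpa using Nat.sub_dvd_pow_sub_pow (c ^ 2) 1 w
            have h3 : (c ^ 2) ^ w = c ^ z₂ := by rw [← pow_mul]; congr 1; omega
            rw [h3] at h1
            exact h2.trans h1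
          have hp2A : p ∣ 2 * A₂ := by
            have he : c ^ z₂ - 1 = 2 * A₂ := by omega
            rw [← he]
            exact hpdvdc1.trans hc1dvd
          rcases (Nat.Prime.dvd_mul hpprime).mp hp2A with h | h
          · have := Nat.le_of_dvd (by norm_num) h; omega
          · exact Dvd.dvd.mul_right h _
        · have hc1dvd : (c + 1) ∣ c ^ z₂ + 1 := by
            have h := Odd.nat_add_dvd_pow_add_pow c 1 hz2o
            simpa using h
          have hp2B : p ∣ 2 * (A₂ + 1) := by
            have he : c ^ z₂ + 1 = 2 * (A₂ + 1) := by omega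
            rw [← he]
            exact hpdvdc1.trans hc1dvd
          rcases (Nat.Prime.dvd_mul hpprime).mp hp2B with h | h
          · have := Nat.le_of_dvd (by norm_num) h; omega
          · exact Dvd.dvd.mul_left h _
      have hpA1B1 : p ∣ A₁ * B₁ := (hiff p hpprime).mp hpA2B2
      have hpN1 : p ∣ c ^ z₁ + 1 := hpdvdc1.trans hdvd1
      rcases (Nat.Prime.dvd_mul hpprime).mp hpA1B1 with h | h
      · have h4 : p ∣ 4 * A₁ := Dvd.dvd.mul_left h 4
        have hdvd2 : p ∣ 2 := by
          have hsub := Nat.dvd_sub hpN1 h4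
          rwa [show c ^ z₁ + 1 - 4 * A₁ = 2 from by omega] at hsub
        have := Nat.le_of_dvd (by norm_num) hdvd2
        omega
      · have h4 : p ∣ 4 * B₁ := Dvd.dvd.mul_left h 4
        have h3N : p ∣ 3 * (c ^ z₁ + 1) := Dvd.dvd.mul_left hpN1 3
        have hdvd2 : p ∣ 2 := by
          have hsub := Nat.dvd_sub h3N h4
          rwa [show 3 * (c ^ z₁ + 1) - 4 * B₁ = 2 from by omega] at hsub
        have := Nat.le_of_dvd (by norm_num) hdvd2
        omega
end

section
/- The only triples (X, Y, z) of positive integers with z ≥ 1, X < Y, X + Y = 13^z, X = 10^{x_1}·3^{x_2} and Y = 10^{y_1}·3^{y_2} for some nonnegative integers x_1, x_2, y_1, y_2 with min(x_1, y_1) = min(x_2, y_2) = 0 and max(x_1, y_1) > 0 and max(x_2, y_2) > 0, are (X, Y, z) = (3, 10, 1) and (X, Y, z) = (10, 3^7, 3). -/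
/-- Periodicity of powers mod `n`. -/
lemma pow_mod_cycle (b d n z : ℕ) (hd : 0 < d) (hn : 1 < n) (h : b ^ d % n = 1) :
    b ^ z % n = b ^ (z % d) % n := by
  conv_lhs => rw [← Nat.div_add_mod z d, pow_add, pow_mul]
  rw [Nat.mul_mod, Nat.pow_mod, h, one_pow, Nat.one_mod_eq_one.mpr (by omega), one_mul,
    Nat.mod_mod_of_dvd _ dvd_rfl]

set_option maxRecDepth 4000 in
lemma D1 : ∀ i < 9, ∀ j < 243, 13 ^ (243 * i + j) % 6561 = 10 → 243 * i + j = 1461 := by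
  decide

set_option maxRecDepth 4000 in
lemma D2 : ∀ j < 4, ∀ k1 < 3, ∀ k2 < 243,
    (3462 ^ j * 11616) % 17497 ≠ (3 ^ (243 * k1 + k2) + 10) % 17497 := by
  decide

set_option maxRecDepth 4000 in
lemma D3 : ∀ i < 18, ∀ j < 15, ∀ k < 30,
    13 ^ (2 * i) % 16531 ≠ (3 ^ (4 * j + 2 * (i % 2)) + 10 ^ (2 * k + 1)) % 16531 := by
  decide

lemma D4 : ∀ i < 3, ∀ j < 6, (3 ^ i + 10 ^ j) % 13 = 0 → j % 2 = 1 := by decide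

lemma D5 : ∀ i < 4, ∀ j < 4, 13 ^ i % 5 = 3 ^ j % 5 → i = j := by decide

set_option maxRecDepth 100000 in
/-- The case `b = 1`: `13^z = 3^a + 10` only for `(z,a) = (1,1), (3,7)`. -/
lemma core1 : ∀ a z : ℕ, 13 ^ z = 3 ^ a + 10 → (z = 1 ∧ a = 1) ∨ (z = 3 ∧ a = 7) := by
  intro a z h
  by_cases hz : z ≤ 3
  · have hpos : 0 < 3 ^ a := pow_pos (by norm_num) a
    interval_cases z
    · norm_num at h
    · left
      refine ⟨rfl, ?_⟩
      have h3 : (3 : ℕ) ^ a = 3 ^ 1 := by rw [pow_one]; omega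
      exact Nat.pow_right_injective (by norm_num) h3
    · exfalso
      have h159 : (3 : ℕ) ^ a = 159 := by norm_num at h; omega
      have ha5 : a < 5 := by
        by_contra hc
        push_neg at hc
        have : (3 : ℕ) ^ 5 ≤ 3 ^ a := Nat.pow_le_pow_right (by norm_num) hc
        norm_num at this; omega
      have := (by decide : ∀ i < 5, (3 : ℕ) ^ i ≠ 159) a ha5
      exact this h159
    · right
      refine ⟨rfl, ?_⟩
      have h3 : (3 : ℕ) ^ a = 3 ^ 7 := by
        have : (3:ℕ)^7 = 2187 := by norm_num
        omega
      exact Nat.pow_right_injective (by norm_num) h3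
  · exfalso
    push_neg at hz
    have hz4 : 4 ≤ z := hz
    have h13 : (28561 : ℕ) ≤ 13 ^ z := by
      calc (28561 : ℕ) = 13 ^ 4 := by norm_num
        _ ≤ 13 ^ z := Nat.pow_le_pow_right (by norm_num) hz4
    have ha8 : 8 ≤ a := by
      by_contra hc
      push_neg at hc
      have : (3 : ℕ) ^ a ≤ 3 ^ 7 := Nat.pow_le_pow_right (by norm_num) (by omega)
      norm_num at this; omega
    have hdvd : (3 : ℕ) ^ a % 6561 = 0 := by
      have h8 : (3 : ℕ) ^ 8 ∣ 3 ^ a := pow_dvd_pow 3 ha8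
      have : (6561 : ℕ) ∣ 3 ^ a := by norm_num at h8 ⊢; exact h8
      omega
    have h1 : 13 ^ z % 6561 = 10 := by rw [h]; omega
    have h2 : 13 ^ (z % 2187) % 6561 = 10 := by
      rw [← pow_mod_cycle 13 2187 6561 z (by norm_num) (by norm_num) (by decide)]
      exact h1
    have hz2187 : z % 2187 = 1461 := by
      have hb := D1 (z % 2187 / 243) (by omega) (z % 2187 % 243) (by omega)
      have e : 243 * (z % 2187 / 243) + z % 2187 % 243 = z % 2187 := by omega
      rw [e] at hb
      exact hb h2
    have ha729 : 13 ^ z % 17497 = (3 ^ (a % 729) + 10) % 17497 := by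
      rw [h, Nat.add_mod, pow_mod_cycle 3 729 17497 a (by norm_num) (by norm_num) (by decide),
        ← Nat.add_mod]
    have hq : z = 2187 * (z / 2187) + 1461 := by omega
    have hlhs : 13 ^ z % 17497 = (3462 ^ (z / 2187 % 4) * 11616) % 17497 := by
      conv_lhs => rw [hq]
      rw [pow_add, pow_mul, Nat.mul_mod, Nat.pow_mod]
      rw [show (13 : ℕ) ^ 2187 % 17497 = 3462 from by decide,
        show (13 : ℕ) ^ 1461 % 17497 = 11616 from by decide,
        pow_mod_cycle 3462 4 17497 (z / 2187) (by norm_num) (by norm_num) (by decide)]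
      conv_rhs => rw [Nat.mul_mod, show (11616 : ℕ) % 17497 = 11616 from rfl]
    have hD := D2 (z / 2187 % 4) (by omega) (a % 729 / 243) (by omega) (a % 729 % 243) (by omega)
    have e2 : 243 * (a % 729 / 243) + a % 729 % 243 = a % 729 := by omega
    rw [e2] at hD
    exact hD (hlhs.symm.trans ha729)

/-- The general equation `13^z = 3^a + 10^b` with `a, b ≥ 1`. -/
lemma coreB : ∀ a b z : ℕ, 1 ≤ a → 1 ≤ b → 13 ^ z = 3 ^ a + 10 ^ b →
    (a = 1 ∧ b = 1 ∧ z = 1) ∨ (a = 7 ∧ b = 1 ∧ z = 3) := by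
  intro a b z ha hb h
  have hz1 : 1 ≤ z := by
    by_contra hc
    push_neg at hc
    interval_cases z
    have h3 : (3 : ℕ) ^ 1 ≤ 3 ^ a := Nat.pow_le_pow_right (by norm_num) ha
    have h10 : (10 : ℕ) ^ 1 ≤ 10 ^ b := Nat.pow_le_pow_right (by norm_num) hb
    norm_num at h h3 h10; omega
  -- b is odd, via mod 13
  have h13 : 13 ^ z % 13 = 0 := by
    have : (13 : ℕ) ∣ 13 ^ z := dvd_pow_self 13 (by omega)
    omega
  have hmod13 : (3 ^ (a % 3) + 10 ^ (b % 6)) % 13 = 0 := by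
    rw [Nat.add_mod, ← pow_mod_cycle 3 3 13 a (by norm_num) (by norm_num) (by norm_num),
      ← pow_mod_cycle 10 6 13 b (by norm_num) (by norm_num) (by norm_num),
      ← Nat.add_mod, ← h]
    exact h13
  have hbodd : b % 2 = 1 := by
    have hD := D4 (a % 3) (by omega) (b % 6) (by omega) hmod13
    have e := Nat.mod_mod_of_dvd b (show (2 : ℕ) ∣ 6 by norm_num)
    omega
  -- a ≡ z mod 4, via mod 5
  have h105 : 10 ^ b % 5 = 0 := by
    have : (5 : ℕ) ∣ 10 ^ b := dvd_pow (by norm_num) (by omega)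
    omega
  have h5 : 13 ^ (z % 4) % 5 = 3 ^ (a % 4) % 5 := by
    calc 13 ^ (z % 4) % 5 = 13 ^ z % 5 :=
          (pow_mod_cycle 13 4 5 z (by norm_num) (by norm_num) (by norm_num)).symm
      _ = (3 ^ a + 10 ^ b) % 5 := by rw [h]
      _ = (3 ^ a % 5 + 10 ^ b % 5) % 5 := Nat.add_mod _ _ _
      _ = 3 ^ (a % 4) % 5 := by
          rw [h105, Nat.add_zero, Nat.mod_mod_of_dvd _ dvd_rfl,
            pow_mod_cycle 3 4 5 a (by norm_num) (by norm_num) (by norm_num)]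
  have hza4 : z % 4 = a % 4 := D5 (z % 4) (by omega) (a % 4) (by omega) h5
  rcases Nat.lt_or_ge b 2 with hb2 | hb2
  · -- b = 1
    have hb1 : b = 1 := by omega
    subst hb1
    rw [pow_one] at h
    rcases core1 a z h with ⟨hz', ha'⟩ | ⟨hz', ha'⟩
    · exact Or.inl ⟨ha', rfl, hz'⟩
    · exact Or.inr ⟨ha', rfl, hz'⟩
  · -- b ≥ 3 : contradiction
    exfalso
    have hb3 : 3 ≤ b := by omega
    have ha2 : a % 2 = 0 := by
      have h4 : 13 ^ z % 4 = 1 := by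
        rw [Nat.pow_mod]; norm_num
      have h104 : 10 ^ b % 4 = 0 := by
        have h2' : (10 : ℕ) ^ 2 ∣ 10 ^ b := pow_dvd_pow 10 (by omega)
        have : (4 : ℕ) ∣ 10 ^ b := dvd_trans (by norm_num) h2'
        omega
      have h34 : 3 ^ (a % 2) % 4 = 1 := by
        rw [← pow_mod_cycle 3 2 4 a (by norm_num) (by norm_num) (by norm_num)]
        omega
      have := (by decide : ∀ i < 2, (3 : ℕ) ^ i % 4 = 1 → i = 0) (a % 2) (by omega) h34
      omega
    have hz2 : z % 2 = 0 := by
      have h108 : 10 ^ b % 8 = 0 := by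
        have h3' : (10 : ℕ) ^ 3 ∣ 10 ^ b := pow_dvd_pow 10 hb3
        have : (8 : ℕ) ∣ 10 ^ b := dvd_trans (by norm_num) h3'
        omega
      have h38 : 3 ^ a % 8 = 1 := by
        rw [pow_mod_cycle 3 2 8 a (by norm_num) (by norm_num) (by norm_num), ha2]
        norm_num
      have h138 : 13 ^ (z % 2) % 8 = 1 := by
        rw [← pow_mod_cycle 13 2 8 z (by norm_num) (by norm_num) (by norm_num)]
        omega
      have := (by decide : ∀ i < 2, (13 : ℕ) ^ i % 8 = 1 → i = 0) (z % 2) (by omega) h138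
      omega
    have hM : 13 ^ (z % 36) % 16531 = (3 ^ (a % 60) + 10 ^ (b % 60)) % 16531 := by
      rw [← pow_mod_cycle 13 36 16531 z (by norm_num) (by norm_num) (by decide), h,
        Nat.add_mod, pow_mod_cycle 3 60 16531 a (by norm_num) (by norm_num) (by decide),
        pow_mod_cycle 10 60 16531 b (by norm_num) (by norm_num) (by decide), ← Nat.add_mod]
    have e1 : z % 36 = 2 * (z % 36 / 2) := by
      have := Nat.mod_mod_of_dvd z (show (2 : ℕ) ∣ 36 by norm_num)
      omega
    have e2 : a % 60 = 4 * (a % 60 / 4) + 2 * (z % 36 / 2 % 2) := by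
      have e3 := Nat.mod_mod_of_dvd a (show (4 : ℕ) ∣ 60 by norm_num)
      have e4 := Nat.mod_mod_of_dvd z (show (4 : ℕ) ∣ 36 by norm_num)
      have e5 := Nat.mod_mod_of_dvd a (show (2 : ℕ) ∣ 4 by norm_num)
      omega
    have e6 : b % 60 = 2 * (b % 60 / 2) + 1 := by
      have := Nat.mod_mod_of_dvd b (show (2 : ℕ) ∣ 60 by norm_num)
      omega
    have hD := D3 (z % 36 / 2) (by omega) (a % 60 / 4) (by omega) (b % 60 / 2) (by omega)
    rw [← e1, ← e2, ← e6] at hD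
    exact hD hM

/-- The only triples `(X, Y, z)` of positive integers with `z ≥ 1`, `X < Y`,
`X + Y = 13^z`, `X = 10^{x₁}·3^{x₂}`, `Y = 10^{y₁}·3^{y₂}` with
`min(x₁,y₁) = min(x₂,y₂) = 0`, `max(x₁,y₁) > 0`, `max(x₂,y₂) > 0`, are `(3, 10, 1)` and
`(10, 3^7, 3)`. -/
theorem only_two_solutions_ten_three_thirteen :
    ∀ X Y z : ℕ,
      ((0 < X ∧ 0 < Y ∧ 1 ≤ z ∧ X < Y ∧ X + Y = 13 ^ z ∧
        ∃ x₁ x₂ y₁ y₂ : ℕ, X = 10 ^ x₁ * 3 ^ x₂ ∧ Y = 10 ^ y₁ * 3 ^ y₂ ∧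
          min x₁ y₁ = 0 ∧ min x₂ y₂ = 0 ∧ 0 < max x₁ y₁ ∧ 0 < max x₂ y₂) ↔
      ((X, Y, z) = (3, 10, 1) ∨ (X, Y, z) = (10, 3 ^ 7, 3))) := by
  intro X Y z
  constructor
  · rintro ⟨hX, hY, hz, hXY, hsum, x₁, x₂, y₁, y₂, hXe, hYe, hmin1, hmin2, hmax1, hmax2⟩
    rcases Nat.min_eq_zero_iff.mp hmin1 with h1 | h1 <;>
      rcases Nat.min_eq_zero_iff.mp hmin2 with h2 | h2
    · -- x₁ = 0, x₂ = 0 : X = 1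
      exfalso
      subst h1; subst h2
      simp only [pow_zero, one_mul, mul_one] at hXe
      subst hXe
      simp only [Nat.max_eq_right (Nat.zero_le _), Nat.zero_max] at hmax1 hmax2
      -- 5 ∣ Y
      have h5Y : (5 : ℕ) ∣ Y := by
        rw [hYe]
        exact Dvd.dvd.mul_right (dvd_pow (by norm_num) (by omega)) _
      have h5z : 13 ^ z % 5 = 1 := by omega
      have h5z' : 13 ^ (z % 4) % 5 = 1 := by
        rw [← pow_mod_cycle 13 4 5 z (by norm_num) (by norm_num) (by norm_num)]
        exact h5z
      have hz4 : z % 4 = 0 :=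
        (by decide : ∀ i < 4, (13 : ℕ) ^ i % 5 = 1 → i = 0) (z % 4) (by omega) h5z'
      have hz2 : z % 2 = 0 := by
        have := Nat.mod_mod_of_dvd z (show (2 : ℕ) ∣ 4 by norm_num)
        omega
      have h7z : 13 ^ z % 7 = 1 := by
        rw [pow_mod_cycle 13 2 7 z (by norm_num) (by norm_num) (by norm_num), hz2]
        norm_num
      have h7Y : (7 : ℕ) ∣ Y := Nat.dvd_of_mod_eq_zero (by omega)
      rw [hYe] at h7Y
      rcases (Nat.Prime.dvd_mul (by norm_num)).mp h7Y with hd | hd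
      · have := Nat.Prime.dvd_of_dvd_pow (p := 7) (by norm_num) hd
        norm_num at this
      · have := Nat.Prime.dvd_of_dvd_pow (p := 7) (by norm_num) hd
        norm_num at this
    · -- x₁ = 0, y₂ = 0 : X = 3^x₂, Y = 10^y₁
      subst h1; subst h2
      simp only [pow_zero, one_mul, mul_one] at hXe hYe
      simp only [Nat.zero_max, Nat.max_eq_left (Nat.zero_le _),
        Nat.max_eq_right (Nat.zero_le _)] at hmax1 hmax2
      subst hXe; subst hYe
      have heq : 13 ^ z = 3 ^ x₂ + 10 ^ y₁ := hsum.symm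
      rcases coreB x₂ y₁ z (by omega) (by omega) heq with ⟨ha, hb, hz'⟩ | ⟨ha, hb, hz'⟩
      · subst ha; subst hb; subst hz'; left; norm_num
      · exfalso; subst ha; subst hb; norm_num at hXY
    · -- y₁ = 0, x₂ = 0 : X = 10^x₁, Y = 3^y₂
      subst h1; subst h2
      simp only [pow_zero, one_mul, mul_one] at hXe hYe
      simp only [Nat.zero_max, Nat.max_eq_left (Nat.zero_le _),
        Nat.max_eq_right (Nat.zero_le _)] at hmax1 hmax2
      subst hXe; subst hYe
      have heq : 13 ^ z = 3 ^ y₂ + 10 ^ x₁ := by omega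
      rcases coreB y₂ x₁ z (by omega) (by omega) heq with ⟨ha, hb, hz'⟩ | ⟨ha, hb, hz'⟩
      · exfalso; subst ha; subst hb; norm_num at hXY
      · subst ha; subst hb; subst hz'; right; norm_num
    · -- y₁ = 0, y₂ = 0 : Y = 1
      exfalso
      subst h1; subst h2
      simp only [pow_zero, one_mul, mul_one] at hYe
      omega
  · rintro (h | h) <;>
      obtain ⟨rfl, rfl, rfl⟩ : _ ∧ _ ∧ _ := by
        simpa [Prod.ext_iff] using h
    · exact ⟨by norm_num, by norm_num, le_refl 1, by norm_num, by norm_num,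
        0, 1, 1, 0, by norm_num, by norm_num, by norm_num, by norm_num, by norm_num, by norm_num⟩
    · exact ⟨by norm_num, by norm_num, by norm_num, by norm_num, by norm_num,
        1, 0, 0, 7, by norm_num, by norm_num, by norm_num, by norm_num, by norm_num, by norm_num⟩
end

section
/- Let r ≥ 2 and m ≥ 3 be integers with m·r ≠ 6. If (2^{m·r} − 1)/(2^r − 1) is a prime power, then m is a prime p and r = p^t for some integer t ≥ 1. -/
/-- If `2^d - 1 ∣ 2^r - 1` then `d ∣ r`. -/
private lemma aux_dvd_of_pow_sub_one_dvd : ∀ r : ℕ, ∀ {d : ℕ}, 1 ≤ d →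
    (2 ^ d - 1 ∣ 2 ^ r - 1) → d ∣ r := by
  intro r
  induction r using Nat.strong_induction_on with
  | _ r ih =>
    intro d hd h
    rcases lt_or_ge r d with hrd | hrd
    · have hmono : 2 ^ r < 2 ^ d := Nat.pow_lt_pow_right one_lt_two hrd
      have h0 : 2 ^ r - 1 = 0 := by
        rcases Nat.eq_zero_or_pos (2 ^ r - 1) with h0 | h0
        · exact h0
        · exact absurd (Nat.le_of_dvd h0 h) (by omega)
      have hr0 : r = 0 := by
        by_contra hr0
        have : (2:ℕ) ^ 1 ≤ 2 ^ r := Nat.pow_le_pow_right (by norm_num) (by omega)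
        simp at this; omega
      simp [hr0]
    · -- r ≥ d : reduce to r - d
      have hA : (2:ℕ) ^ d * 2 ^ (r - d) = 2 ^ r := by
        rw [← pow_add]; congr 1; omega
      have h1 : 1 ≤ (2:ℕ) ^ (r - d) := Nat.one_le_two_pow
      have h2 : 1 ≤ (2:ℕ) ^ d := Nat.one_le_two_pow
      have hp : (2 ^ d - 1) * 2 ^ (r - d) = 2 ^ r - 2 ^ (r - d) := by
        rw [Nat.sub_mul, one_mul, hA]
      have hd2 : 2 ^ d - 1 ∣ (2 ^ r - 1) - ((2 ^ d - 1) * 2 ^ (r - d)) :=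
        Nat.dvd_sub h (Dvd.intro _ rfl)
      have heq : (2 ^ r - 1) - ((2 ^ d - 1) * 2 ^ (r - d)) = 2 ^ (r - d) - 1 := by
        rw [hp]
        have : 2 ^ (r - d) ≤ 2 ^ r := Nat.pow_le_pow_right (by norm_num) (by omega)
        omega
      rw [heq] at hd2
      rcases Nat.eq_zero_or_pos d with rfl | hdpos
      · omega
      have hlt : r - d < r := by omega
      have := ih (r - d) hlt hd hd2
      have := Nat.dvd_add this (dvd_refl d)
      rwa [Nat.sub_add_cancel hrd] at this

private lemma aux_ineq {e u : ℕ} (he : 2 ≤ e) (hu : 3 ≤ u) :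
    4 * u + 3 * e ≤ 2 * (e * u) + 6 := by nlinarith

private lemma aux_cube_le : ∀ u : ℕ, 3 ≤ u → u ^ 3 ≤ 2 ^ (4 * u - 6) := by
  intro u hu
  induction u, hu using Nat.le_induction with
  | base => norm_num
  | succ u hu3 ih =>
    have h1 : 4 * (u + 1) - 6 = (4 * u - 6) + 4 := by omega
    rw [h1, pow_add]
    have h2 : (u + 1) ^ 3 ≤ 16 * u ^ 3 := by
      have e1 : (u + 1) ^ 3 = u ^ 3 + 3 * u ^ 2 + 3 * u + 1 := by ring
      have e2 : u ^ 2 ≤ u ^ 3 := Nat.pow_le_pow_right (by omega) (by omega)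
      have e3 : u ≤ u ^ 3 := by
        calc u = u ^ 1 := (pow_one u).symm
        _ ≤ u ^ 3 := Nat.pow_le_pow_right (by omega) (by omega)
      have e4 : 1 ≤ u ^ 3 := Nat.one_le_pow _ _ (by omega)
      rw [e1]; linarith
    have h3 : 16 * u ^ 3 ≤ 2 ^ (4 * u - 6) * 2 ^ 4 := by
      have := Nat.mul_le_mul_left 16 ih
      omega
    omega

/-- Let `r ≥ 2` and `m ≥ 3` be integers with `m·r ≠ 6`.  If `(2^{m·r} - 1)/(2^r - 1)` is a
prime power, then `m` is a prime `p` and `r = p^t` for some integer `t ≥ 1`. -/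
theorem prime_power_quotient_forces_shape (r m : ℕ) (hr : 2 ≤ r) (hm : 3 ≤ m)
    (h6 : m * r ≠ 6) (hpp : IsPrimePow ((2 ^ (m * r) - 1) / (2 ^ r - 1))) :
    ∃ p t : ℕ, p.Prime ∧ 1 ≤ t ∧ m = p ∧ r = p ^ t := by
  obtain ⟨q, a, hq, ha, hN⟩ := hpp
  have hqp : q.Prime := hq.nat_prime
  haveI : Fact q.Prime := ⟨hqp⟩
  haveI : NeZero q := ⟨hqp.ne_zero⟩
  set n := m * r with hn
  clear_value n
  have hn0 : 6 ≤ n := by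
    rw [hn]
    calc 6 = 3 * 2 := by norm_num
    _ ≤ m * r := Nat.mul_le_mul hm hr
  have h3r : 3 * r ≤ n := by
    rw [hn]; exact Nat.mul_le_mul_right r hm
  have h2npow : ∀ k : ℕ, 1 ≤ (2:ℕ) ^ k := fun k => Nat.one_le_two_pow
  have h2rlt : (2:ℕ) ^ 1 ≤ 2 ^ r := Nat.pow_le_pow_right (by norm_num) (by omega)
  have h2r1pos : 0 < 2 ^ r - 1 := by simp at h2rlt; omega
  have hdvd : 2 ^ r - 1 ∣ 2 ^ n - 1 := by
    have := (by simpa only [one_pow, pow_mul] using Nat.sub_dvd_pow_sub_pow (2 ^ r) 1 m : 2 ^ r - 1 ∣ 2 ^ (r * m) - 1)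
    rwa [show r * m = n by rw [hn, Nat.mul_comm]] at this
  set N := (2 ^ n - 1) / (2 ^ r - 1) with hNdef
  have hmul : (2 ^ r - 1) * N = 2 ^ n - 1 := Nat.mul_div_cancel' hdvd
  clear_value N
  have hNq : N = q ^ a := hN.symm
  have hNlb : 2 ^ (n - r) ≤ N := by
    have he : (2:ℕ) ^ r * 2 ^ (n - r) = 2 ^ n := by
      rw [← pow_add]; congr 1; omega
    have hsm : (2 ^ r - 1) * 2 ^ (n - r) = 2 ^ n - 2 ^ (n - r) := by
      rw [Nat.sub_mul, one_mul, he]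
    have h1 : (2 ^ r - 1) * 2 ^ (n - r) ≤ 2 ^ n - 1 := by
      have := h2npow (n - r); omega
    rw [← hmul] at h1
    exact Nat.le_of_mul_le_mul_left h1 h2r1pos
  have hNpos : 0 < N := lt_of_lt_of_le (Nat.pow_pos (n := n - r) (by norm_num : 0 < 2)) hNlb
  have hqN : q ∣ N := by rw [hNq]; exact dvd_pow_self q (by omega)
  have hN_dvd : N ∣ 2 ^ n - 1 := ⟨2 ^ r - 1, by rw [← hmul]; ring⟩
  have hodd : ¬ 2 ∣ (2 ^ n - 1) := by
    have h1 : (2:ℕ) ∣ 2 ^ n := dvd_pow_self 2 (by omega)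
    have h2 := h2npow n
    omega
  have hq2 : q ≠ 2 := by rintro rfl; exact hodd (hqN.trans hN_dvd)
  have hq3 : 3 ≤ q := by have := hqp.two_le; omega
  have hqodd : Odd q := hqp.odd_of_ne_two hq2
  have h2ne : (2 : ZMod q) ≠ 0 := by
    have : ((2:ℕ) : ZMod q) ≠ 0 := by
      rw [Ne, ZMod.natCast_eq_zero_iff]
      intro h
      have := Nat.le_of_dvd (by norm_num) h
      omega
    simpa using this
  have hdvd_iff : ∀ k : ℕ, q ∣ 2 ^ k - 1 ↔ (2 : ZMod q) ^ k = 1 := by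
    intro k
    have h1 : (1:ℕ) ≤ 2 ^ k := Nat.one_le_two_pow
    rw [← ZMod.natCast_eq_zero_iff]
    rw [show (((2 ^ k - 1 : ℕ)) : ZMod q) = (2 : ZMod q) ^ k - 1 by push_cast [h1]; ring]
    rw [sub_eq_zero]
  set e := orderOf (2 : ZMod q) with he_def
  have horder : ∀ k, q ∣ 2 ^ k - 1 ↔ e ∣ k := by
    intro k; rw [hdvd_iff k, he_def, orderOf_dvd_iff_pow_eq_one]
  have hedvd : e ∣ q - 1 := ZMod.orderOf_dvd_card_sub_one h2ne
  clear_value e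
  have he0 : e ≠ 0 := by
    intro h
    rw [h] at hedvd
    have := Nat.eq_zero_of_zero_dvd hedvd
    omega
  have heq1 : q ∣ 2 ^ e - 1 := (horder e).mpr dvd_rfl
  have he1 : e ≠ 1 := by
    intro h
    rw [h] at heq1
    norm_num at heq1
    omega
  have he2 : 2 ≤ e := by omega
  have hq2e : ¬ q ∣ 2 ^ e := by
    intro h
    exact hq2 ((Nat.prime_dvd_prime_iff_eq hqp Nat.prime_two).mp (hqp.dvd_of_dvd_pow h))
  have hval : ∀ k, k ≠ 0 → e ∣ k → padicValNat q (2 ^ k - 1) = padicValNat q (2 ^ e - 1) + padicValNat q (k / e) := by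
    rintro k hk ⟨s, rfl⟩
    have hs0 : s ≠ 0 := by rintro rfl; simp at hk
    have hx : 1 < (2:ℕ) ^ e := by
      have : (2:ℕ) ^ 1 ≤ 2 ^ e := Nat.pow_le_pow_right (by norm_num) (by omega)
      simp at this; omega
    have key := padicValNat.pow_sub_pow (p := q) hqodd (x := 2 ^ e) (y := 1)
      hx (by simpa using heq1) hq2e hs0
    simp only [one_pow] at key
    rw [pow_mul, key, Nat.mul_div_cancel_left s (by omega : 0 < e)]
  have hvr : padicValNat q (2 ^ n - 1) = a + padicValNat q (2 ^ r - 1) := by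
    rw [← hmul, padicValNat.mul (by omega) (by omega), hNq, padicValNat.prime_pow]
    ring
  have hen : e ∣ n := (horder n).mp (hqN.trans hN_dvd)
  -- Step A : the order of 2 mod q does not divide r
  have hnotr : ¬ e ∣ r := by
    intro her
    have hvn := hval n (by omega) hen
    have hvr2 := hval r (by omega) her
    have hre0 : r / e ≠ 0 := by
      have := Nat.div_pos (Nat.le_of_dvd (by omega) her) (by omega : 0 < e)
      omega
    have hnm : n / e = m * (r / e) := by rw [hn, Nat.mul_div_assoc m her]
    have hvdiv : padicValNat q (n / e) = padicValNat q m + padicValNat q (r / e) :=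
      by rw [hnm]; exact padicValNat.mul (by omega) hre0
    have ha_eq : a = padicValNat q m := by omega
    have hqam : q ^ a ∣ m := by rw [ha_eq]; exact pow_padicValNat_dvd
    have hNm : N ≤ m := by rw [hNq]; exact Nat.le_of_dvd (by omega) hqam
    -- but N ≥ 2^(n-r) > m
    have hmr : m + r ≤ n := by
      obtain ⟨m', rfl⟩ : ∃ m', m = m' + 3 := ⟨m - 3, by omega⟩
      obtain ⟨r', rfl⟩ : ∃ r', r = r' + 2 := ⟨r - 2, by omega⟩
      have : n = (m' + 3) * (r' + 2) := hn
      have hnn : n = m' * r' + 2 * m' + 3 * r' + 6 := by rw [this]; ring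
      omega
    have h1 : m < 2 ^ m := Nat.lt_two_pow_self
    have h3 : 2 ^ m ≤ 2 ^ (n - r) := Nat.pow_le_pow_right (by norm_num) (by omega)
    omega
  -- Step B : the order of 2 mod q is exactly n
  have hen_eq : e = n := by
    by_contra hne
    obtain ⟨u, hu⟩ := id hen
    have hu0 : u ≠ 0 := by rintro rfl; omega
    have hu1 : u ≠ 1 := by rintro rfl; rw [mul_one] at hu; exact hne hu.symm
    have h2e : 2 * e ≤ n := by
      have : e * 2 ≤ e * u := Nat.mul_le_mul_left e (by omega)
      omega
    have hvr0 : padicValNat q (2 ^ r - 1) = 0 :=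
      padicValNat.eq_zero_of_not_dvd (fun h => hnotr ((horder r).mp h))
    have hvn := hval n (by omega) hen
    have hne_u : n / e = u := by rw [hu]; exact Nat.mul_div_cancel_left u (by omega : 0 < e)
    have ha_eq : a = padicValNat q (2 ^ e - 1) + padicValNat q (n / e) := by omega
    have hqc : q ^ padicValNat q (2 ^ e - 1) ∣ 2 ^ e - 1 := pow_padicValNat_dvd
    have h2e1 : 0 < 2 ^ e - 1 := by
      have : (2:ℕ) ^ 1 ≤ 2 ^ e := Nat.pow_le_pow_right (by norm_num) (by omega)
      simp at this; omega
    have hqcle : q ^ padicValNat q (2 ^ e - 1) ≤ 2 ^ e - 1 := Nat.le_of_dvd h2e1 hqc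
    have herle : e + r ≤ n := by omega
    rcases Nat.eq_zero_or_pos (padicValNat q (n / e)) with hs0 | hs1
    · -- s = 0 : N = q^c ≤ 2^e - 1 < 2^(n-r) ≤ N
      have hNle : N ≤ 2 ^ e - 1 := by
        rw [hNq, ha_eq, hs0, add_zero]; exact hqcle
      have h2 : 2 ^ e ≤ 2 ^ (n - r) := Nat.pow_le_pow_right (by norm_num) (by omega)
      omega
    · -- s ≥ 1
      have hqdvd_u : q ^ padicValNat q (n / e) ∣ u := by rw [← hne_u]; exact pow_padicValNat_dvd
      have hqsle : q ^ padicValNat q (n / e) ≤ u := Nat.le_of_dvd (by omega) hqdvd_u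
      have hq1s : q ≤ q ^ padicValNat q (n / e) := by
        calc q = q ^ 1 := (pow_one q).symm
        _ ≤ q ^ padicValNat q (n / e) := Nat.pow_le_pow_right (by omega) hs1
      have hu3 : 3 ≤ u := le_trans hq3 (le_trans hq1s hqsle)
      set E := n - r - e with hE_def
      clear_value E
      have h3E : 4 * u ≤ 3 * E + 6 := by
        have h1 : 4 * u + 3 * e ≤ 2 * (e * u) + 6 := aux_ineq he2 hu3
        rw [← hu] at h1
        omega
      have hcube : u ^ 3 ≤ 2 ^ (4 * u - 6) := aux_cube_le u hu3
      have h2E : u ≤ 2 ^ E := by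
        have h1 : (2:ℕ) ^ (4 * u - 6) ≤ 2 ^ (3 * E) := Nat.pow_le_pow_right (by norm_num) (by omega)
        have h2 : u ^ 3 ≤ (2 ^ E) ^ 3 := by
          rw [← pow_mul, Nat.mul_comm E 3]
          exact le_trans hcube h1
        exact (Nat.pow_le_pow_iff_left (by norm_num)).mp h2
      have hNub : N < 2 ^ e * u := by
        have hNeq : N = q ^ padicValNat q (2 ^ e - 1) * q ^ padicValNat q (n / e) := by rw [hNq, ha_eq, pow_add]
        calc N = q ^ padicValNat q (2 ^ e - 1) * q ^ padicValNat q (n / e) := hNeq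
        _ ≤ (2 ^ e - 1) * u := Nat.mul_le_mul hqcle hqsle
        _ < 2 ^ e * u := by
            have h2e' : (2:ℕ) ^ 1 ≤ 2 ^ e := Nat.pow_le_pow_right (by norm_num) (by omega)
            exact (Nat.mul_lt_mul_right (by omega : 0 < u)).mpr (by simp at h2e'; omega)
      have hNlb2 : 2 ^ e * u ≤ N := by
        have h1 : n - r = e + E := by omega
        calc 2 ^ e * u ≤ 2 ^ e * 2 ^ E := Nat.mul_le_mul_left _ h2E
        _ = 2 ^ (n - r) := by rw [← pow_add, h1]
        _ ≤ N := hNlb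
      omega
  -- Step C : every proper divisor of n divides r
  have hproper : ∀ d, d ∣ n → d ≠ n → d ∣ r := by
    intro d hdn hdne
    have hd0 : d ≠ 0 := by rintro rfl; rw [zero_dvd_iff] at hdn; omega
    have hdltn : d < n := lt_of_le_of_ne (Nat.le_of_dvd (by omega) hdn) hdne
    obtain ⟨k, hk⟩ := hdn
    have hdvd2 : 2 ^ d - 1 ∣ 2 ^ n - 1 := by
      rw [hk]; exact (by simpa only [one_pow, pow_mul] using Nat.sub_dvd_pow_sub_pow (2 ^ d) 1 k)
    have hndvd : ¬ q ∣ 2 ^ d - 1 := by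
      intro h
      have := (horder d).mp h
      rw [hen_eq] at this
      exact absurd (Nat.le_of_dvd (by omega) this) (by omega)
    have hcop : Nat.Coprime (2 ^ d - 1) (q ^ a) :=
      (Nat.Coprime.pow_left a (hqp.coprime_iff_not_dvd.mpr hndvd)).symm
    have hdd : 2 ^ d - 1 ∣ (2 ^ r - 1) * q ^ a := by
      rw [← hNq, hmul]; exact hdvd2
    have hfin : 2 ^ d - 1 ∣ 2 ^ r - 1 := (Nat.Coprime.dvd_of_dvd_mul_right hcop) hdd
    exact aux_dvd_of_pow_sub_one_dvd r (by omega) hfin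
  -- Step D : conclude
  obtain ⟨p, hp_def⟩ : ∃ p, p = m.minFac := ⟨_, rfl⟩
  have hpp' : p.Prime := by rw [hp_def]; exact Nat.minFac_prime (by omega)
  obtain ⟨m', hm'⟩ := m.minFac_dvd
  rw [← hp_def] at hm'
  have hm'0 : m' ≠ 0 := by rintro rfl; rw [mul_zero] at hm'; omega
  have hEn : n = p * (m' * r) := by rw [hn, hm']; ring
  have hd1 : (m' * r) ∣ r := by
    apply hproper
    · exact ⟨p, by rw [hEn]; ring⟩
    · intro h
      rw [h] at hEn
      have h2 : 2 * n ≤ p * n := Nat.mul_le_mul_right n hpp'.two_le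
      omega
  have hm'1 : m' = 1 := by
    have hle : m' * r ≤ r := Nat.le_of_dvd (by omega) hd1
    by_contra h
    have h2 : 2 * r ≤ m' * r := Nat.mul_le_mul_right r (by omega)
    omega
  have hmp : m = p := by rw [hm', hm'1, mul_one]
  have hunique : ∀ {ℓ : ℕ}, ℓ.Prime → ℓ ∣ r → ℓ = p := by
    intro ℓ hl hlr
    by_contra hlp
    obtain ⟨r', hr'⟩ := hlr
    have hr'0 : r' ≠ 0 := by rintro rfl; rw [mul_zero] at hr'; omega
    have hdd : (p * r') ∣ r := by
      apply hproper
      · exact ⟨ℓ, by rw [hn, hmp, hr']; ring⟩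
      · intro h
        have heq2 : p * r' = p * (ℓ * r') := by rw [h, hn, hmp, hr']
        have h3 := Nat.eq_of_mul_eq_mul_left hpp'.pos heq2
        have h4 : 2 * r' ≤ ℓ * r' := Nat.mul_le_mul_right r' hl.two_le
        omega
    rw [hr', mul_comm ℓ r'] at hdd
    rw [mul_comm p r'] at hdd
    have h5 : p ∣ ℓ := (Nat.mul_dvd_mul_iff_left (by omega : 0 < r')).mp hdd
    exact hlp ((Nat.prime_dvd_prime_iff_eq hpp' hl).mp h5).symm
  have ht : r = p ^ r.primeFactorsList.length :=
    Nat.eq_prime_pow_of_unique_prime_dvd (by omega) (fun hd hdvd => hunique hd hdvd)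
  refine ⟨p, r.primeFactorsList.length, hpp', ?_, hmp, ht⟩
  by_contra h
  have : r.primeFactorsList.length = 0 := by omega
  rw [this, pow_zero] at ht
  omega
end
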